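/- For every k ∈ ℕ and every finite subset E of the free group F, ⟨χ_k ∗ χ_E, χ_E⟩ ≤ 2 · q^{⌊k/2⌋} · |E|. Equivalently, the number of pairs (u, v) ∈ E × E with |v u⁻¹| = k is at most 2 q^{⌊k/2⌋} |E|. -/

import Mathlib

open scoped ENNReal

noncomputable section

/-- Word length on the free group: the number of letters of the reduced word. -/
def wlen {α : Type*} [DecidableEq α] (x : FreeGroup α) : ℕ := x.toWord.length

/-- Convolution of `ℝ≥0∞`-valued functions on a group:
`(f ∗ g)(x) = Σ_y f(y) g(y⁻¹ x)`. -/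
def conv {G : Type*} [Group G] (f g : G → ℝ≥0∞) (x : G) : ℝ≥0∞ :=
  ∑' y, f y * g (y⁻¹ * x)

/-- Indicator (ℝ≥0∞-valued) of the sphere of radius `k` in the free group. -/
def sphInd {α : Type*} [DecidableEq α] (k : ℕ) (x : FreeGroup α) : ℝ≥0∞ :=
  if wlen x = k then 1 else 0

/-- Indicator function (ℝ≥0∞-valued) of a finite set. -/
def finInd {G : Type*} [DecidableEq G] (E : Finset G) (x : G) : ℝ≥0∞ :=
  if x ∈ E then 1 else 0

namespace SphereConvAux

set_option linter.unusedSectionVars false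

open List

variable {α : Type*} [DecidableEq α]

/-- Formal inverse of a letter. -/
def iv (a : α × Bool) : α × Bool := (a.1, !a.2)

@[simp] lemma iv_iv (a : α × Bool) : iv (iv a) = a := by
  cases a with | mk x b => simp [iv]

/-- A word is reduced. -/
def IsRed (L : List (α × Bool)) : Prop := List.Chain' (fun a b => a ≠ iv b) L

lemma IsRed.reduce_eq {L : List (α × Bool)} (h : IsRed L) : FreeGroup.reduce L = L := by
  induction L with
  | nil => rfl
  | cons a L ih =>
    have hL : IsRed L := h.tail
    rw [FreeGroup.reduce.cons, ih hL]
    cases L with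
    | nil => rfl
    | cons b L' =>
      have hab : a ≠ iv b := h.rel_head
      have : ¬ (a.1 = b.1 ∧ a.2 = !b.2) := by
        intro ⟨h1, h2⟩
        exact hab (Prod.ext h1 h2)
      simp [this]

lemma isRed_reduce (L : List (α × Bool)) : IsRed (FreeGroup.reduce L) := by
  by_contra hc
  rw [IsRed, List.Chain', List.isChain_iff_getElem] at hc
  push_neg at hc
  obtain ⟨i, hi, hR⟩ := hc
  set M := FreeGroup.reduce L with hM
  have hdecomp : M = M.take i ++ (M.get ⟨i, by omega⟩) :: (M.get ⟨i+1, by omega⟩) :: M.drop (i+2) := by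
    have h1 : M.drop i = M.get ⟨i, by omega⟩ :: M.drop (i+1) := by
      rw [List.drop_eq_getElem_cons (by omega)]; rfl
    have h2 : M.drop (i+1) = M.get ⟨i+1, by omega⟩ :: M.drop (i+2) := by
      rw [List.drop_eq_getElem_cons (by omega)]; rfl
    rw [← h2, ← h1, List.take_append_drop]
  have hb : M.get ⟨i, by omega⟩ = iv (M.get ⟨i+1, by omega⟩) := hR
  set c := M.get ⟨i+1, by omega⟩
  have key : FreeGroup.reduce L = M.take i ++ (c.1, !c.2) :: (c.1, !(!c.2)) :: M.drop (i+2) := by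
    conv_lhs => rw [← hM, hdecomp]
    rw [hb]
    simp [iv]
  exact FreeGroup.reduce.not key

lemma isRed_toWord (x : FreeGroup α) : IsRed x.toWord := by
  have := isRed_reduce (α := α) x.toWord
  rwa [FreeGroup.reduce_toWord] at this

lemma toWord_mk_of_isRed {L : List (α × Bool)} (h : IsRed L) : (FreeGroup.mk L).toWord = L := by
  rw [FreeGroup.toWord_mk, h.reduce_eq]

lemma isRed_invRev {L : List (α × Bool)} (h : IsRed L) : IsRed (FreeGroup.invRev L) := by
  have hrw : FreeGroup.invRev L = (L.map iv).reverse := rfl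
  rw [IsRed, hrw, List.Chain', List.isChain_reverse, List.isChain_map]
  apply List.IsChain.imp _ h
  intro a b hab
  intro hc
  rw [iv_iv] at hc
  exact hab hc.symm

lemma head?_invRev (L : List (α × Bool)) : (FreeGroup.invRev L).head? = L.getLast?.map iv := by
  have hrw : FreeGroup.invRev L = (L.map iv).reverse := rfl
  rw [hrw, List.head?_reverse, List.getLast?_map]

/-- The cancellation decomposition for a quotient of two elements of a free group. -/
lemma exists_decomp_aux : ∀ (n : ℕ) (x u : FreeGroup α), u.toWord.length ≤ n →
    ∃ P Q S : List (α × Bool), x.toWord = P ++ S ∧ u.toWord = Q ++ S ∧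
      (x * u⁻¹).toWord = P ++ FreeGroup.invRev Q := by
  intro n
  induction n with
  | zero =>
    intro x u hu
    have hu0 : u.toWord = [] := List.length_eq_zero_iff.mp (Nat.le_zero.mp hu)
    have hu1 : u = 1 := FreeGroup.toWord_eq_nil_iff.mp hu0
    exact ⟨x.toWord, [], [], by simp, by simp [hu0], by simp [hu1, FreeGroup.invRev]⟩
  | succ n ih =>
    intro x u hu
    by_cases hU : u.toWord = []
    · have hu1 : u = 1 := FreeGroup.toWord_eq_nil_iff.mp hU
      exact ⟨x.toWord, [], [], by simp, by simp [hU], by simp [hu1, FreeGroup.invRev]⟩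
    by_cases hmain : x.toWord ≠ [] ∧ x.toWord.getLast? = u.toWord.getLast?
    · obtain ⟨hX, hlast⟩ := hmain
      set t := u.toWord.getLast hU with ht
      have hxw : x.toWord = x.toWord.dropLast ++ [t] := by
        conv_lhs => rw [← x.toWord.dropLast_append_getLast hX]
        congr 1
        have h1 : x.toWord.getLast? = some (x.toWord.getLast hX) := List.getLast?_eq_getLast hX
        have h2 : u.toWord.getLast? = some t := List.getLast?_eq_getLast hU
        rw [h1, h2] at hlast
        simpa using hlast
      have huw : u.toWord = u.toWord.dropLast ++ [t] := (u.toWord.dropLast_append_getLast hU).symm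
      set x' := FreeGroup.mk x.toWord.dropLast with hx'
      set u' := FreeGroup.mk u.toWord.dropLast with hu'
      have hx'w : x'.toWord = x.toWord.dropLast :=
        toWord_mk_of_isRed ((isRed_toWord x).prefix (List.dropLast_prefix _))
      have hu'w : u'.toWord = u.toWord.dropLast :=
        toWord_mk_of_isRed ((isRed_toWord u).prefix (List.dropLast_prefix _))
      have hxeq : x = x' * FreeGroup.mk [t] := by
        conv_lhs => rw [← FreeGroup.mk_toWord (x := x), hxw]
        rw [hx', FreeGroup.mul_mk]
      have hueq : u = u' * FreeGroup.mk [t] := by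
        conv_lhs => rw [← FreeGroup.mk_toWord (x := u), huw]
        rw [hu', FreeGroup.mul_mk]
      have hlen : u'.toWord.length ≤ n := by
        rw [hu'w]
        have : u.toWord.length ≥ 1 := by
          cases h : u.toWord with
          | nil => exact absurd h hU
          | cons a l => simp
        simp only [List.length_dropLast]
        omega
      obtain ⟨P, Q, S, h1, h2, h3⟩ := ih x' u' hlen
      refine ⟨P, Q, S ++ [t], ?_, ?_, ?_⟩
      · rw [hxw, ← List.append_assoc, ← h1, hx'w]
      · rw [huw, ← List.append_assoc, ← h2, hu'w]
      · have : x * u⁻¹ = x' * u'⁻¹ := by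
          rw [hxeq, hueq]
          group
        rw [this, h3]
    · push_neg at hmain
      refine ⟨x.toWord, u.toWord, [], by simp, by simp, ?_⟩
      have hprod : x * u⁻¹ = FreeGroup.mk (x.toWord ++ FreeGroup.invRev u.toWord) := by
        conv_lhs => rw [← FreeGroup.mk_toWord (x := x), ← FreeGroup.mk_toWord (x := u)]
        rw [FreeGroup.inv_mk, FreeGroup.mul_mk]
      rw [hprod]
      apply toWord_mk_of_isRed
      rw [IsRed, List.Chain', List.isChain_append]
      refine ⟨isRed_toWord x, isRed_invRev (isRed_toWord u), ?_⟩
      intro a ha b hb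
      have hXne : x.toWord ≠ [] := by
        intro h
        rw [h] at ha
        simp at ha
      have hne := hmain hXne
      rw [head?_invRev] at hb
      obtain ⟨c, hc, rfl⟩ := Option.mem_map.mp hb
      intro hac
      rw [iv_iv] at hac
      apply hne
      rw [ha, hc, hac]

lemma exists_decomp (x u : FreeGroup α) :
    ∃ P Q S : List (α × Bool), x.toWord = P ++ S ∧ u.toWord = Q ++ S ∧
      (x * u⁻¹).toWord = P ++ FreeGroup.invRev Q :=
  exists_decomp_aux u.toWord.length x u le_rfl

instance : DecidablePred (IsRed (α := α)) := fun L => inferInstanceAs (Decidable (List.IsChain _ L))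

/-- All lists of a given length over a fintype, as a finset. -/
def lists (β : Type*) [DecidableEq β] [Fintype β] : ℕ → Finset (List β)
  | 0 => {[]}
  | n + 1 => Finset.univ.biUnion fun a => (lists β n).image (List.cons a)

lemma mem_lists {β : Type*} [DecidableEq β] [Fintype β] :
    ∀ {n : ℕ} {L : List β}, L ∈ lists β n ↔ L.length = n
  | 0, L => by simp [lists, List.length_eq_zero_iff]
  | n + 1, L => by
    simp only [lists, Finset.mem_biUnion, Finset.mem_univ, Finset.mem_image, true_and]
    constructor
    · rintro ⟨a, M, hM, rfl⟩
      simp [mem_lists.mp hM]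
    · intro hL
      cases L with
      | nil => simp at hL
      | cons a M =>
        exact ⟨a, M, mem_lists.mpr (by simpa using hL), rfl⟩

variable [Fintype α]

/-- Counting reduced words with a constraint on the last letter. -/
lemma card_red_filter_le (F : Finset (α × Bool)) :
    ∀ n : ℕ, 1 ≤ n →
    (((lists (α × Bool) n)).filter (fun L => IsRed L ∧ ∀ c ∈ L.getLast?, c ∉ F)).card
      ≤ (2 * Fintype.card α - F.card) * (2 * Fintype.card α - 1) ^ (n - 1) := by
  intro n
  induction n with
  | zero => omega
  | succ n ih =>
    intro _
    have hcard2 : Fintype.card (α × Bool) = 2 * Fintype.card α := by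
      simp [Fintype.card_prod, mul_comm]
    rcases Nat.eq_zero_or_pos n with hn | hn
    · subst hn
      -- length-one lists
      have hsub : ((lists (α × Bool) 1)).filter (fun L => IsRed L ∧ ∀ c ∈ L.getLast?, c ∉ F)
          ⊆ (Finset.univ \ F).image (fun a => [a]) := by
        intro L hL
        simp only [Finset.mem_filter, mem_lists] at hL
        obtain ⟨hlen, _, hc⟩ := hL
        obtain ⟨a, rfl⟩ := List.length_eq_one_iff.mp hlen
        apply Finset.mem_image_of_mem
        simp only [Finset.mem_sdiff, Finset.mem_univ, true_and]
        exact hc a (by simp)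
      calc _ ≤ ((Finset.univ \ F).image (fun a => [a])).card := Finset.card_le_card hsub
        _ ≤ (Finset.univ \ F).card := Finset.card_image_le
        _ ≤ (2 * Fintype.card α - F.card) * (2 * Fintype.card α - 1) ^ (1 - 1) := by
            rw [Finset.card_sdiff_of_subset (Finset.subset_univ F), Finset.card_univ, hcard2]
            simp
    · obtain ⟨m, rfl⟩ : ∃ m, n = m + 1 := ⟨n - 1, by omega⟩
      have key : (((lists (α × Bool) (m + 2))).filter
            (fun L => IsRed L ∧ ∀ c ∈ L.getLast?, c ∉ F)).card
          ≤ (2 * Fintype.card α - 1) *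
            (((lists (α × Bool) (m + 1))).filter
              (fun L => IsRed L ∧ ∀ c ∈ L.getLast?, c ∉ F)).card := by
        apply Finset.card_le_mul_card_image_of_maps_to (f := List.tail)
        · intro L hL
          simp only [Finset.mem_filter, mem_lists] at hL ⊢
          obtain ⟨hlen, hred, hc⟩ := hL
          obtain ⟨a, M, rfl⟩ := List.exists_cons_of_ne_nil
            (show L ≠ [] by intro h; rw [h] at hlen; simp at hlen)
          obtain ⟨b, M', rfl⟩ := List.exists_cons_of_ne_nil
            (show M ≠ [] by intro h; rw [h] at hlen; simp at hlen)
          refine ⟨by simpa using hlen, hred.tail, ?_⟩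
          intro c hcc
          exact hc c (by rw [List.getLast?_cons_cons]; exact hcc)
        · intro M hM
          simp only [Finset.mem_filter, mem_lists] at hM
          obtain ⟨b, M', rfl⟩ := List.exists_cons_of_ne_nil
            (show M ≠ [] by intro h; rw [h] at hM; simp at hM)
          have hsub : (((lists (α × Bool) (m + 2))).filter
                (fun L => (IsRed L ∧ ∀ c ∈ L.getLast?, c ∉ F) ∧ L.tail = b :: M'))
              ⊆ (Finset.univ.erase (iv b)).image (fun a => a :: b :: M') := by
            intro L hL
            simp only [Finset.mem_filter, mem_lists] at hL
            obtain ⟨hlen, ⟨hred, -⟩, htail⟩ := hL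
            obtain ⟨a, T, hLa⟩ := List.exists_cons_of_ne_nil
              (show L ≠ [] by intro h; rw [h] at hlen; simp at hlen)
            subst hLa
            simp only [List.tail_cons] at htail
            subst htail
            apply Finset.mem_image_of_mem
            exact Finset.mem_erase.mpr ⟨hred.rel_head, Finset.mem_univ _⟩
          rw [Finset.filter_filter]
          calc _ ≤ ((Finset.univ.erase (iv b)).image (fun a => a :: b :: M')).card :=
                Finset.card_le_card hsub
            _ ≤ (Finset.univ.erase (iv b)).card := Finset.card_image_le
            _ = 2 * Fintype.card α - 1 := by
                rw [Finset.card_erase_of_mem (Finset.mem_univ _), Finset.card_univ, hcard2]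
      calc _ ≤ _ := key
        _ ≤ (2 * Fintype.card α - 1) *
              ((2 * Fintype.card α - F.card) * (2 * Fintype.card α - 1) ^ (m + 1 - 1)) :=
            Nat.mul_le_mul_left _ (ih (by omega))
        _ = (2 * Fintype.card α - F.card) * (2 * Fintype.card α - 1) ^ (m + 2 - 1) := by
            rw [show m + 2 - 1 = m + 1 from rfl, show m + 1 - 1 = m from rfl, pow_succ]
            ring


section Good

variable [Fintype α]

/-- Admissible "near halves" `Q` of a word at distance `k` from the base word `X`. -/
def good (X : List (α × Bool)) (k : ℕ) (Q : List (α × Bool)) : Prop :=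
  IsRed Q ∧ k ≤ X.length + Q.length ∧
    ∀ c ∈ Q.getLast?,
      (∀ p ∈ X[k - Q.length - 1]?, c ≠ p) ∧ (∀ s ∈ X[k - Q.length]?, c ≠ iv s)

instance (X : List (α × Bool)) (k : ℕ) : DecidablePred (good X k) := fun Q => by
  unfold good; infer_instance

def goodFinset (X : List (α × Bool)) (k l : ℕ) : Finset (List (α × Bool)) :=
  (Finset.range (l+1)).biUnion (fun j => (lists (α × Bool) j).filter (good X k))

lemma geom_aux (q : ℕ) (hq : 1 ≤ q) (m : ℕ) : ∀ l, m ≤ l →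
    q ^ m + ∑ j ∈ Finset.Ico (m+1) (l+1), (q-1) * q^(j-1) = q ^ l := by
  intro l
  induction l with
  | zero =>
    intro h
    have : m = 0 := Nat.le_zero.mp h
    subst this
    simp
  | succ l ihl =>
    intro hm
    rcases Nat.lt_or_ge m (l+1) with hlt | hge
    · have hml : m ≤ l := by omega
      rw [Finset.sum_Ico_succ_top (by omega), ← add_assoc, ihl hml]
      obtain ⟨s, rfl⟩ : ∃ s, q = s + 1 := ⟨q - 1, by omega⟩
      rw [show l + 1 - 1 = l from rfl, show s + 1 - 1 = s from rfl]
      ring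
    · have : m = l + 1 := by omega
      subst this
      simp

lemma card_goodFinset_le (X : List (α × Bool)) (hX : IsRed X) (k l : ℕ) (hl : l = k / 2)
    (hA : 2 ≤ Fintype.card α) :
    (goodFinset X k l).card ≤ (2 * Fintype.card α - 1) ^ l := by
  set q := 2 * Fintype.card α - 1 with hqdef
  have hq : 1 ≤ q := by omega
  set n := X.length with hn
  set m := k - n with hm
  -- per-length cardinalities
  set f : ℕ → ℕ := fun j => ((lists (α × Bool) j).filter (good X k)).card with hf
  have hzero : ∀ j, j < m → f j = 0 := by
    intro j hj
    rw [hf]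
    simp only [Finset.card_eq_zero]
    rw [Finset.filter_eq_empty_iff]
    intro Q hQ
    rw [mem_lists] at hQ
    intro hgood
    have h2 := hgood.2.1
    omega
  have hsingle : f 0 ≤ 1 := by
    rw [hf]
    calc ((lists (α × Bool) 0).filter (good X k)).card ≤ (lists (α × Bool) 0).card :=
        Finset.card_le_card (Finset.filter_subset _ _)
      _ = 1 := by rw [lists]; simp
  have hstep : ∀ j, 1 ≤ j → j ≤ l → f j ≤ (if j = m then q ^ j else (q-1) * q^(j-1)) := by
    intro j hj1 hjl
    have hkj : j ≤ k - j := by omega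
    have hkj1 : 1 ≤ k - j := by omega
    by_cases hjm : j = m
    · -- here k - j = n (the common part is empty at this length)
      have hkn : k - j = n := by omega
      have hn1 : 1 ≤ n := by omega
      have hidx : k - j - 1 < n := by omega
      rw [if_pos hjm]
      have hsub : (lists (α × Bool) j).filter (good X k) ⊆
          (lists (α × Bool) j).filter
            (fun L => IsRed L ∧ ∀ c ∈ L.getLast?,
              c ∉ ({X[k - j - 1]'(by omega)} : Finset (α × Bool))) := by
        intro Q hQ
        simp only [Finset.mem_filter] at hQ ⊢
        obtain ⟨hQl, hred, -, hlast⟩ := hQ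
        refine ⟨hQl, hred, ?_⟩
        intro c hc
        rw [mem_lists] at hQl
        have h1 := (hlast c hc).1
        simp only [Finset.mem_singleton]
        intro hcontra
        exact h1 (X[k - j - 1]'(by omega))
          (by rw [hQl, List.getElem?_eq_getElem (by omega)]; rfl) hcontra
      have hb := card_red_filter_le ({X[k - j - 1]'(by omega)} : Finset (α × Bool)) j hj1
      rw [Finset.card_singleton] at hb
      calc f j ≤ _ := Finset.card_le_card hsub
        _ ≤ (2 * Fintype.card α - 1) * (2 * Fintype.card α - 1)^(j-1) := hb
        _ = q ^ j := by
          rw [← hqdef, ← pow_succ', show j - 1 + 1 = j by omega]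
    · rw [if_neg hjm]
      by_cases hjm2 : j < m
      · rw [hzero j hjm2]
        exact Nat.zero_le _
      · have hmj : m < j := by omega
        have hidx2 : k - j < n := by omega
        have hidx1 : k - j - 1 < n := by omega
        have hkj' : k - j = (k - j - 1) + 1 := by omega
        have hne : (X[k - j - 1]'(by omega)) ≠ iv (X[k - j]'(by omega)) := by
          have hc := List.isChain_iff_getElem.mp hX (k - j - 1) (by omega)
          intro hcontra
          apply hc
          convert hcontra using 3 <;> omega
        set F : Finset (α × Bool) :=
          {X[k - j - 1]'(by omega), iv (X[k - j]'(by omega))} with hF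
        have hsub : (lists (α × Bool) j).filter (good X k) ⊆
            (lists (α × Bool) j).filter
              (fun L => IsRed L ∧ ∀ c ∈ L.getLast?, c ∉ F) := by
          intro Q hQ
          simp only [Finset.mem_filter] at hQ ⊢
          obtain ⟨hQl, hred, -, hlast⟩ := hQ
          refine ⟨hQl, hred, ?_⟩
          intro c hc
          rw [mem_lists] at hQl
          have h1 := (hlast c hc).1
          have h2 := (hlast c hc).2
          rw [hF]
          simp only [Finset.mem_insert, Finset.mem_singleton]
          push_neg
          constructor
          · exact h1 (X[k - j - 1]'(by omega))
              (by rw [hQl, List.getElem?_eq_getElem (by omega)]; rfl)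
          · exact h2 (X[k - j]'(by omega))
              (by rw [hQl, List.getElem?_eq_getElem (by omega)]; rfl)
        have hb := card_red_filter_le F j hj1
        rw [hF, Finset.card_pair hne] at hb
        calc f j ≤ _ := Finset.card_le_card hsub
          _ ≤ (2 * Fintype.card α - 2) * (2 * Fintype.card α - 1)^(j-1) := hb
          _ = (q - 1) * q^(j-1) := by
            rw [show 2 * Fintype.card α - 2 = q - 1 by omega, ← hqdef]
  -- assemble
  have hbi : (goodFinset X k l).card ≤ ∑ j ∈ Finset.range (l+1), f j :=
    Finset.card_biUnion_le
  by_cases hml : l < m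
  · have : ∀ j ∈ Finset.range (l+1), f j = 0 := by
      intro j hj
      rw [Finset.mem_range] at hj
      exact hzero j (by omega)
    calc (goodFinset X k l).card ≤ ∑ j ∈ Finset.range (l+1), f j := hbi
      _ = 0 := Finset.sum_eq_zero this
      _ ≤ q ^ l := Nat.zero_le _
  · have hml' : m ≤ l := by omega
    have hpart1 : ∑ j ∈ Finset.range (m+1), f j ≤ q ^ m := by
      rw [Finset.sum_range_succ]
      have h0 : ∑ j ∈ Finset.range m, f j = 0 :=
        Finset.sum_eq_zero (fun j hj => hzero j (Finset.mem_range.mp hj))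
      rw [h0, zero_add]
      rcases Nat.eq_zero_or_pos m with h | h
      · rw [h]
        simpa using hsingle
      · have := hstep m h hml'
        rwa [if_pos rfl] at this
    have hpart2 : ∑ j ∈ Finset.Ico (m+1) (l+1), f j
        ≤ ∑ j ∈ Finset.Ico (m+1) (l+1), (q-1) * q^(j-1) := by
      apply Finset.sum_le_sum
      intro j hj
      rw [Finset.mem_Ico] at hj
      have := hstep j (by omega) (by omega)
      rwa [if_neg (by omega)] at this
    calc (goodFinset X k l).card ≤ ∑ j ∈ Finset.range (l+1), f j := hbi
      _ = ∑ j ∈ Finset.range (m+1), f j + ∑ j ∈ Finset.Ico (m+1) (l+1), f j :=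
        (Finset.sum_range_add_sum_Ico _ (by omega)).symm
      _ ≤ q^m + ∑ j ∈ Finset.Ico (m+1) (l+1), (q-1) * q^(j-1) := add_le_add hpart1 hpart2
      _ = q ^ l := geom_aux q hq m l hml'

end Good


section Core

variable [Fintype α]

lemma wlen_inv (x : FreeGroup α) : wlen x⁻¹ = wlen x := by
  rw [wlen, wlen, FreeGroup.toWord_inv, FreeGroup.invRev_length]

/-- The core counting lemma: for a fixed base point `a`, the number of `b ∈ E`
at distance `k` whose "difference quotient" has short second half is at most `q^l`. -/
lemma core_count (k l : ℕ) (hl : l = k / 2) (hA : 2 ≤ Fintype.card α)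
    (a : FreeGroup α) (E : Finset (FreeGroup α)) :
    (E.filter fun b => wlen (a * b⁻¹) = k ∧ (wlen b + k - wlen a) / 2 ≤ l).card
      ≤ (2 * Fintype.card α - 1) ^ l := by
  classical
  refine le_trans (Finset.card_le_card_of_injOn
      (fun b => b.toWord.take ((wlen b + k - wlen a) / 2))
      (t := goodFinset a.toWord k l) ?_ ?_)
    (card_goodFinset_le _ (isRed_toWord a) k l hl hA)
  · -- maps to goodFinset
    intro b hb
    rw [Finset.mem_coe, Finset.mem_filter] at hb
    obtain ⟨hbE, hk, hjl⟩ := hb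
    obtain ⟨P, Q, S, h1, h2, h3⟩ := exists_decomp a b
    have hPQ : P.length + Q.length = k := by
      have := congrArg List.length h3
      rw [wlen] at hk
      rw [hk, List.length_append, FreeGroup.invRev_length] at this
      omega
    have hwa : wlen a = P.length + S.length := by
      rw [wlen, h1, List.length_append]
    have hwb : wlen b = Q.length + S.length := by
      rw [wlen, h2, List.length_append]
    have hj : (wlen b + k - wlen a) / 2 = Q.length := by omega
    have hwa0 : a.toWord.length = wlen a := rfl
    have hphi : b.toWord.take ((wlen b + k - wlen a) / 2) = Q := by
      rw [hj, h2, List.take_left]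
    show b.toWord.take ((wlen b + k - wlen a) / 2) ∈ goodFinset a.toWord k l
    rw [hphi, goodFinset, Finset.mem_biUnion]
    refine ⟨Q.length, Finset.mem_range.mpr (by omega), ?_⟩
    rw [Finset.mem_filter, mem_lists]
    refine ⟨rfl, ?_, ?_, ?_⟩
    · exact List.IsChain.prefix (h2 ▸ isRed_toWord b) (List.prefix_append Q S)
    · omega
    · intro c hc
      have hQne : Q ≠ [] := by
        intro h
        rw [h] at hc
        simp at hc
      have hQ1 : 1 ≤ Q.length := List.length_pos_iff.mpr hQne
      have hP1 : 1 ≤ P.length := by omega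
      have hPne : P ≠ [] := by
        intro h
        rw [h] at hP1
        simp at hP1
      have hred3 : IsRed (P ++ FreeGroup.invRev Q) := h3 ▸ isRed_toWord (a * b⁻¹)
      have hred2 : IsRed (Q ++ S) := h2 ▸ isRed_toWord b
      have J1 := (List.isChain_append.mp hred3).2.2
      have J2 := (List.isChain_append.mp hred2).2.2
      constructor
      · intro p hp
        have hidx : a.toWord[k - Q.length - 1]? = P.getLast? := by
          rw [h1, List.getElem?_append_left (by omega), List.getLast?_eq_getElem?]
          congr 1
          omega
        rw [hidx] at hp
        have := J1 p hp (iv c) (by rw [head?_invRev, hc]; rfl)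
        intro hcontra
        rw [hcontra, iv_iv] at this
        exact this rfl
      · intro st hst
        have hidx : a.toWord[k - Q.length]? = S.head? := by
          rw [h1, List.getElem?_append_right (by omega), List.head?_eq_getElem?]
          congr 1
          omega
        rw [hidx] at hst
        exact J2 c hc st hst
  · -- injective on the filtered set
    intro b hb b' hb' heq
    simp only [Finset.coe_filter, Set.mem_setOf_eq, Finset.mem_filter] at hb hb'
    obtain ⟨-, hk, -⟩ := hb
    obtain ⟨-, hk', -⟩ := hb'
    obtain ⟨P, Q, S, h1, h2, h3⟩ := exists_decomp a b
    obtain ⟨P', Q', S', h1', h2', h3'⟩ := exists_decomp a b'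
    have hPQ : P.length + Q.length = k := by
      have := congrArg List.length h3
      rw [wlen] at hk
      rw [hk, List.length_append, FreeGroup.invRev_length] at this
      omega
    have hPQ' : P'.length + Q'.length = k := by
      have := congrArg List.length h3'
      rw [wlen] at hk'
      rw [hk', List.length_append, FreeGroup.invRev_length] at this
      omega
    have hwa : wlen a = P.length + S.length := by rw [wlen, h1, List.length_append]
    have hwa' : wlen a = P'.length + S'.length := by rw [wlen, h1', List.length_append]
    have hwb : wlen b = Q.length + S.length := by rw [wlen, h2, List.length_append]
    have hwb' : wlen b' = Q'.length + S'.length := by rw [wlen, h2', List.length_append]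
    have hj : (wlen b + k - wlen a) / 2 = Q.length := by omega
    have hj' : (wlen b' + k - wlen a) / 2 = Q'.length := by omega
    have hphi : b.toWord.take ((wlen b + k - wlen a) / 2) = Q := by
      rw [hj, h2, List.take_left]
    have hphi' : b'.toWord.take ((wlen b' + k - wlen a) / 2) = Q' := by
      rw [hj', h2', List.take_left]
    have heq' : Q = Q' := by rw [← hphi, ← hphi']; exact heq
    subst heq'
    have hlenP : P.length = P'.length := by omega
    obtain ⟨hPP, hSS⟩ := List.append_inj (h1.symm.trans h1') hlenP
    apply FreeGroup.toWord_injective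
    rw [h2, h2', hSS]

end Core

end SphereConvAux




/-- For every `k` and every finite subset `E` of the free group,
`⟨χ_k ∗ χ_E, χ_E⟩ ≤ 2 q^{⌊k/2⌋} |E|`. -/
theorem sphere_conv_self_inner_le
    (r : ℕ) (hr : 2 ≤ r) (q : ℕ) (hq : q = 2 * r - 1)
    (k : ℕ) (E : Finset (FreeGroup (Fin r))) :
    ∑' x : FreeGroup (Fin r), conv (sphInd k) (finInd E) x * finInd E x
      ≤ 2 * (q : ℝ≥0∞) ^ (k / 2) * (E.card : ℝ≥0∞) := by
  classical
  set l := k / 2 with hl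
  have hA : 2 ≤ Fintype.card (Fin r) := by rw [Fintype.card_fin]; exact hr
  have hq' : 2 * Fintype.card (Fin r) - 1 = q := by rw [Fintype.card_fin]; omega
  -- Step 1: pointwise evaluation of the convolution
  have hconv : ∀ x : FreeGroup (Fin r),
      conv (sphInd k) (finInd E) x = ∑ u ∈ E, sphInd k (x * u⁻¹) := by
    intro x
    rw [conv]
    let e : FreeGroup (Fin r) ≃ FreeGroup (Fin r) :=
      { toFun := fun u => x * u⁻¹, invFun := fun y => y⁻¹ * x,
        left_inv := fun u => by group, right_inv := fun y => by group }
    rw [← Equiv.tsum_eq e (fun y => sphInd k y * finInd E (y⁻¹ * x))]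
    have hsimp : ∀ u : FreeGroup (Fin r), (x * u⁻¹)⁻¹ * x = u := fun u => by group
    have hbody : ∀ u : FreeGroup (Fin r),
        sphInd k (e u) * finInd E ((e u)⁻¹ * x) = sphInd k (x * u⁻¹) * finInd E u := by
      intro u
      show sphInd k (x * u⁻¹) * finInd E ((x * u⁻¹)⁻¹ * x) = _
      rw [hsimp]
    calc ∑' u, sphInd k (e u) * finInd E ((e u)⁻¹ * x)
        = ∑' u, sphInd k (x * u⁻¹) * finInd E u := by
          apply tsum_congr
          exact hbody
      _ = ∑ u ∈ E, sphInd k (x * u⁻¹) * finInd E u := by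
          apply tsum_eq_sum
          intro u hu
          rw [finInd, if_neg hu, mul_zero]
      _ = ∑ u ∈ E, sphInd k (x * u⁻¹) := by
          apply Finset.sum_congr rfl
          intro u hu
          rw [finInd, if_pos hu, mul_one]
  -- the combinatorial count
  set N : ℕ := ∑ x ∈ E, (E.filter (fun u => wlen (x * u⁻¹) = k)).card with hN
  -- Step 2: the ℕ-level bound
  have hNle : N ≤ 2 * q ^ l * E.card := by
    have hsplit : ∀ x, (E.filter (fun u => wlen (x * u⁻¹) = k)).card =
        (E.filter (fun u => wlen (x * u⁻¹) = k ∧ (wlen u + k - wlen x) / 2 ≤ l)).card +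
        (E.filter (fun u => wlen (x * u⁻¹) = k ∧ ¬ ((wlen u + k - wlen x) / 2 ≤ l))).card := by
      intro x
      rw [← Finset.filter_filter, ← Finset.filter_filter,
        Finset.card_filter_add_card_filter_not]
    have hterm1 : ∀ x : FreeGroup (Fin r),
        (E.filter (fun u => wlen (x * u⁻¹) = k ∧ (wlen u + k - wlen x) / 2 ≤ l)).card
          ≤ q ^ l := by
      intro x
      have := SphereConvAux.core_count k l hl hA x E
      rwa [hq'] at this
    have hterm2 : ∑ x ∈ E,
        (E.filter (fun u => wlen (x * u⁻¹) = k ∧ ¬ ((wlen u + k - wlen x) / 2 ≤ l))).card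
          ≤ E.card * q ^ l := by
      have hswap : ∑ x ∈ E,
          (E.filter (fun u => wlen (x * u⁻¹) = k ∧ ¬ ((wlen u + k - wlen x) / 2 ≤ l))).card
        = ∑ u ∈ E,
          (E.filter (fun x => wlen (x * u⁻¹) = k ∧ ¬ ((wlen u + k - wlen x) / 2 ≤ l))).card := by
        simp only [Finset.card_filter]
        exact Finset.sum_comm
      rw [hswap]
      apply le_trans (Finset.sum_le_sum ?_) (le_of_eq (by rw [Finset.sum_const, smul_eq_mul]))
      intro u hu
      have hsub : E.filter (fun x => wlen (x * u⁻¹) = k ∧ ¬ ((wlen u + k - wlen x) / 2 ≤ l))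
          ⊆ E.filter (fun x => wlen (u * x⁻¹) = k ∧ (wlen x + k - wlen u) / 2 ≤ l) := by
        intro x hx
        rw [Finset.mem_filter] at hx ⊢
        obtain ⟨hxE, hk, hnot⟩ := hx
        have hkinv : wlen (u * x⁻¹) = k := by
          have hux : u * x⁻¹ = (x * u⁻¹)⁻¹ := by group
          rw [hux, SphereConvAux.wlen_inv, hk]
        refine ⟨hxE, hkinv, ?_⟩
        obtain ⟨P, Q, S, h1, h2, h3⟩ := SphereConvAux.exists_decomp x u
        have hPQ : P.length + Q.length = k := by
          have := congrArg List.length h3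
          rw [wlen] at hk
          rw [hk, List.length_append, FreeGroup.invRev_length] at this
          omega
        have hwx : wlen x = P.length + S.length := by rw [wlen, h1, List.length_append]
        have hwu : wlen u = Q.length + S.length := by rw [wlen, h2, List.length_append]
        omega
      calc _ ≤ (E.filter (fun x => wlen (u * x⁻¹) = k ∧ (wlen x + k - wlen u) / 2 ≤ l)).card :=
            Finset.card_le_card hsub
        _ ≤ q ^ l := by
            have := SphereConvAux.core_count k l hl hA u E
            rwa [hq'] at this
    calc N = ∑ x ∈ E,
          ((E.filter (fun u => wlen (x * u⁻¹) = k ∧ (wlen u + k - wlen x) / 2 ≤ l)).card +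
           (E.filter (fun u => wlen (x * u⁻¹) = k ∧ ¬ ((wlen u + k - wlen x) / 2 ≤ l))).card) := by
          rw [hN]
          exact Finset.sum_congr rfl (fun x _ => hsplit x)
      _ = ∑ x ∈ E,
          (E.filter (fun u => wlen (x * u⁻¹) = k ∧ (wlen u + k - wlen x) / 2 ≤ l)).card +
          ∑ x ∈ E,
          (E.filter (fun u => wlen (x * u⁻¹) = k ∧ ¬ ((wlen u + k - wlen x) / 2 ≤ l))).card :=
          Finset.sum_add_distrib
      _ ≤ E.card * q ^ l + E.card * q ^ l := by
          apply add_le_add ?_ hterm2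
          apply le_trans (Finset.sum_le_sum (fun x _ => hterm1 x))
          rw [Finset.sum_const, smul_eq_mul]
      _ = 2 * q ^ l * E.card := by ring
  -- Step 3: identify the tsum with `N` and conclude
  calc ∑' x : FreeGroup (Fin r), conv (sphInd k) (finInd E) x * finInd E x
      = ∑ x ∈ E, conv (sphInd k) (finInd E) x := by
        rw [tsum_eq_sum (s := E) (fun x hx => by rw [finInd, if_neg hx, mul_zero])]
        exact Finset.sum_congr rfl (fun x hx => by rw [finInd, if_pos hx, mul_one])
    _ = (N : ℝ≥0∞) := by
        rw [hN, Nat.cast_sum]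
        apply Finset.sum_congr rfl
        intro x hx
        rw [hconv x]
        simp only [sphInd]
        rw [Finset.sum_boole]
    _ ≤ ((2 * q ^ l * E.card : ℕ) : ℝ≥0∞) := by
        exact_mod_cast Nat.cast_le.mpr hNle
    _ = 2 * (q : ℝ≥0∞) ^ (k / 2) * (E.card : ℝ≥0∞) := by
        rw [hl]
        push_cast
        ring
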